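/- Let Ω ⊆ ℝⁿ be a nonempty compact set and let f₁, f₂, g₁, g₂ : ℝⁿ → ℝ be continuous functions such that g₁(x) − g₂(x) > 0 for all x ∈ Ω. Define Q(x) = (f₁(x) − f₂(x)) / (g₁(x) − g₂(x)) and q* = min_{x∈Ω} Q(x). Given any x⁰ ∈ Ω, set r⁰ = Q(x⁰), and define iteratively x^{k+1} ∈ argmin_{x∈Ω} { f₁(x) + r^k·g₂(x) − f₂(x) − r^k·g₁(x) } and r^{k+1} = Q(x^{k+1}). Then the sequence (r^k) is nonincreasing, bounded below by q*, and converges to q*. -/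
import Mathlib


noncomputable section

/-- Dinkelbach's two-step iterative scheme for the fractional program
`min_{x ∈ Ω} (f₁(x) − f₂(x)) / (g₁(x) − g₂(x))`: the sequence of ratios `r^k` is
nonincreasing, bounded below by the optimal value `q*`, and converges to `q*`. -/
theorem stmt19 {n : ℕ} (Ω : Set (Fin n → ℝ)) (hne : Ω.Nonempty) (hcomp : IsCompact Ω)
    (f₁ f₂ g₁ g₂ : (Fin n → ℝ) → ℝ)
    (hf₁ : Continuous f₁) (hf₂ : Continuous f₂)
    (hg₁ : Continuous g₁) (hg₂ : Continuous g₂)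
    (hg : ∀ x ∈ Ω, 0 < g₁ x - g₂ x)
    (Q : (Fin n → ℝ) → ℝ) (hQ : ∀ x, Q x = (f₁ x - f₂ x) / (g₁ x - g₂ x))
    (qstar : ℝ) (hq : IsLeast (Q '' Ω) qstar)
    (x : ℕ → (Fin n → ℝ)) (r : ℕ → ℝ)
    (hx0 : x 0 ∈ Ω) (hr0 : r 0 = Q (x 0))
    (hmem : ∀ k, x (k + 1) ∈ Ω)
    (hargmin : ∀ k, ∀ y ∈ Ω,
      f₁ (x (k + 1)) + r k * g₂ (x (k + 1)) - f₂ (x (k + 1)) - r k * g₁ (x (k + 1)) ≤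
        f₁ y + r k * g₂ y - f₂ y - r k * g₁ y)
    (hr : ∀ k, r (k + 1) = Q (x (k + 1))) :
    (∀ k, r (k + 1) ≤ r k) ∧ (∀ k, qstar ≤ r k) ∧
      Filter.Tendsto r Filter.atTop (nhds qstar) := by
  have hmemall : ∀ k, x k ∈ Ω := by
    intro k; cases k with
    | zero => exact hx0
    | succ k => exact hmem k
  have hrall : ∀ k, r k = Q (x k) := by
    intro k; cases k with
    | zero => exact hr0
    | succ k => exact hr k
  have hlow : ∀ k, qstar ≤ r k := by
    intro k
    rw [hrall k]
    exact hq.2 ⟨x k, hmemall k, rfl⟩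
  have hG : ∀ k, 0 < g₁ (x k) - g₂ (x k) := fun k => hg _ (hmemall k)
  have hkey : ∀ k, r k * (g₁ (x k) - g₂ (x k)) = f₁ (x k) - f₂ (x k) := by
    intro k
    rw [hrall k, hQ, div_mul_cancel₀ _ (hG k).ne']
  have hstep : ∀ k, ∀ y ∈ Ω,
      (r (k + 1) - r k) * (g₁ (x (k + 1)) - g₂ (x (k + 1))) ≤
        f₁ y - f₂ y - r k * (g₁ y - g₂ y) := by
    intro k y hy
    have h1 := hargmin k y hy
    have h2 := hkey (k + 1)
    nlinarith [h1, h2]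
  have hmono : ∀ k, r (k + 1) ≤ r k := by
    intro k
    have h := hstep k (x k) (hmemall k)
    have h2 := hkey k
    nlinarith [hG (k + 1)]
  refine ⟨hmono, hlow, ?_⟩
  have hanti : Antitone r := antitone_nat_of_succ_le hmono
  have hbdd : BddBelow (Set.range r) := ⟨qstar, fun v ⟨k, hk⟩ => hk ▸ hlow k⟩
  have htend : Filter.Tendsto r Filter.atTop (nhds (⨅ k, r k)) :=
    tendsto_atTop_ciInf hanti hbdd
  have hL : (⨅ k, r k) = qstar := by
    refine le_antisymm ?_ (le_ciInf hlow)
    by_contra h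
    push_neg at h
    set L := ⨅ k, r k with hLdef
    obtain ⟨xs, hxs, hQxs⟩ := hq.1
    have hGs : 0 < g₁ xs - g₂ xs := hg _ hxs
    obtain ⟨z, hz, hzmax⟩ :=
      hcomp.exists_isMaxOn hne ((hg₁.sub hg₂).continuousOn)
    set M := g₁ z - g₂ z with hM
    have hM0 : 0 < M := hg _ hz
    set δ := (L - qstar) * (g₁ xs - g₂ xs) with hδ
    have hδ0 : 0 < δ := mul_pos (by linarith) hGs
    have hLle : ∀ k, L ≤ r k := fun k => ciInf_le hbdd k
    have hdec : ∀ k, r (k + 1) ≤ r k - δ / M := by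
      intro k
      have h1 := hstep k xs hxs
      have h2 : f₁ xs - f₂ xs = qstar * (g₁ xs - g₂ xs) := by
        rw [← hQxs, hQ]; field_simp
      have h3 : (r (k + 1) - r k) * (g₁ (x (k + 1)) - g₂ (x (k + 1))) ≤ -δ := by
        have h4 : (qstar - r k) * (g₁ xs - g₂ xs) ≤ -δ := by
          have := hLle k
          nlinarith
        nlinarith [h1, h2]
      have hd : 0 ≤ r k - r (k + 1) := by linarith [hmono k]
      have hGM : g₁ (x (k + 1)) - g₂ (x (k + 1)) ≤ M := hzmax (hmemall (k + 1))
      have h5 : δ ≤ (r k - r (k + 1)) * M := by nlinarith [hG (k + 1)]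
      have h6 : δ / M ≤ r k - r (k + 1) := (div_le_iff₀ hM0).mpr h5
      linarith
    have hind : ∀ k : ℕ, r k ≤ r 0 - k * (δ / M) := by
      intro k
      induction k with
      | zero => simp
      | succ k ih =>
        have := hdec k
        push_cast
        push_cast at ih
        linarith
    have hpos : 0 < δ / M := div_pos hδ0 hM0
    obtain ⟨k, hk⟩ := exists_nat_gt ((r 0 - qstar) / (δ / M))
    have hk2 : r 0 - qstar < k * (δ / M) := by
      rw [div_lt_iff₀ hpos] at hk
      linarith
    have := hlow k
    have := hind k
    linarith
  rw [← hL]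
  exact htend
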